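/- arXiv:math/9310207 — 2 statements merged into one kernel-verified Lean document; each statement's English description precedes it below -/
import Mathlib

section
/- Let R be a commutative ring, let C be a group embedded as a subgroup in groups A and B, and let G = A *_C B be the amalgamated free product (pushout in groups). Let P_k be a projective right RA-module, Q_k a projective right RB-module, and N_k a projective right RC-module, and suppose N_k ⊗_{RC} RA is a direct summand of P_k and N_k ⊗_{RC} RB is a direct summand of Q_k. Then the quotient S_k of (P_k ⊗_{RA} RG) ⊕ (Q_k ⊗_{RB} RG) by the submodule generated by all elements ((n ⊗ 1), −(n ⊗ 1)) for n ∈ N_k (via the given summand embeddings) is a projective RG-module. -/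
/-!
Shared infrastructure.  Following standard practice in Mathlib (e.g. `Rep R G`),
we work with *left* modules over the group ring `MonoidAlgebra R G`; for group
rings the categories of left and right modules are equivalent, so this is the
usual formalization of the paper's "right `RA`-modules".
-/

universe u

namespace GP

/-- The augmentation map `RG → R`, sending each group element to `1`. -/
noncomputable def aug (R G : Type u) [CommRing R] [Group G] :
    MonoidAlgebra R G →ₐ[R] R :=
  MonoidAlgebra.lift R R G 1

/-- A projective resolution `⋯ → X n → ⋯ → X 1 → X 0 → R → 0` of the group `G`
over the commutative ring `R`: an exact sequence of projective modules over the
group ring `MonoidAlgebra R G`, with `X 0 = RG` (recorded as the isomorphism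
`iso0`) and augmentation `aug R G` as the map `X 0 → R`. -/
structure Resolution (R : Type u) [CommRing R] (G : Type u) [Group G] :
    Type (u + 1) where
  X : ℕ → Type u
  [acg : ∀ n, AddCommGroup (X n)]
  [modR : ∀ n, Module R (X n)]
  [modG : ∀ n, Module (MonoidAlgebra R G) (X n)]
  [tower : ∀ n, IsScalarTower R (MonoidAlgebra R G) (X n)]
  /-- the boundary maps -/
  d : ∀ n, X (n + 1) →ₗ[MonoidAlgebra R G] X n
  /-- every module in the resolution is projective -/
  projective : ∀ n, Module.Projective (MonoidAlgebra R G) (X n)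
  /-- `X 0` is the group ring itself -/
  iso0 : X 0 ≃ₗ[MonoidAlgebra R G] MonoidAlgebra R G
  /-- exactness at `X (n+1)` -/
  exact_succ : ∀ n, LinearMap.range (d (n + 1)) = LinearMap.ker (d n)
  /-- exactness at `X 0`, the map `X 0 → R` being the augmentation -/
  exact_zero : ∀ x : X 0, aug R G (iso0 x) = 0 ↔ x ∈ LinearMap.range (d 0)

attribute [instance] Resolution.acg Resolution.modR Resolution.modG Resolution.tower

end GP
namespace GP

universe v

section Induced

variable {S T : Type v} [Ring S] [Ring T] (φ : S →+* T)
variable (N : Type v) [AddCommMonoid N] [Module S N]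

/-- The relations defining the induced module `N ⊗_S T` (for left modules,
`T ⊗_S N`): inside the free `T`-module on `N`, additivity in `N` and the
relation `1 ⊗ (s • n) = φ s ⊗ n`. -/
noncomputable def indRels : Submodule T (N →₀ T) :=
  Submodule.span T
    ({x | ∃ n n' : N,
        x = Finsupp.single (n + n') (1 : T) - Finsupp.single n 1 - Finsupp.single n' 1} ∪
     {x | ∃ (s : S) (n : N),
        x = Finsupp.single (s • n) (1 : T) - Finsupp.single n (φ s)})

/-- The module obtained from the `S`-module `N` by induction (extension of
scalars) along `φ : S →+* T`; for group rings of a subgroup inclusion `C ≤ A`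
this is the induced module `N ⊗_{RC} RA`. -/
def Induced : Type v := (N →₀ T) ⧸ indRels φ N

noncomputable instance : AddCommGroup (Induced φ N) :=
  inferInstanceAs (AddCommGroup ((N →₀ T) ⧸ indRels φ N))

noncomputable instance : Module T (Induced φ N) :=
  inferInstanceAs (Module T ((N →₀ T) ⧸ indRels φ N))

/-- `indMk φ N n` is the element `n ⊗ 1` of the induced module. -/
noncomputable def indMk : N → Induced φ N := fun n => Submodule.Quotient.mk (Finsupp.single n 1)

variable {N} {N' : Type v} [AddCommMonoid N'] [Module S N']

/-- Functoriality of the induced module: the map `f ⊗ 1`. -/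
noncomputable def indMap (f : N →ₗ[S] N') : Induced φ N →ₗ[T] Induced φ N' :=
  Submodule.mapQ _ _ (Finsupp.lmapDomain T T f) <| by
    refine Submodule.span_le.2 ?_
    rintro x (⟨n, n', rfl⟩ | ⟨s, n, rfl⟩) <;>
      simp only [Submodule.mem_comap, map_sub, Finsupp.lmapDomain_apply,
        Finsupp.mapDomain_single, SetLike.mem_coe]
    · exact Submodule.subset_span (Or.inl ⟨f n, f n', by rw [map_add]⟩)
    · exact Submodule.subset_span (Or.inr ⟨s, f n, by rw [map_smul]⟩)

variable {M : Type v} [AddCommGroup M] [Module T M]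

/-- The universal property of the induced module: an additive map `f : N → M`
into a `T`-module satisfying `f (s • n) = φ s • f n` extends uniquely to a
`T`-linear map on the induced module. -/
noncomputable def indLift (f : N →+ M) (hf : ∀ (s : S) (n : N), f (s • n) = φ s • f n) :
    Induced φ N →ₗ[T] M :=
  Submodule.liftQ _ (Finsupp.lsum ℕ fun n => LinearMap.toSpanSingleton T M (f n)) <| by
    refine Submodule.span_le.2 ?_
    rintro x (⟨n, n', rfl⟩ | ⟨s, n, rfl⟩) <;>
      simp only [SetLike.mem_coe, LinearMap.mem_ker, map_sub, Finsupp.lsum_single,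
        LinearMap.toSpanSingleton_apply, one_smul]
    · rw [f.map_add]; abel
    · rw [hf]; abel

@[simp] lemma indLift_indMk (f : N →+ M) (hf : ∀ (s : S) (n : N), f (s • n) = φ s • f n)
    (n : N) : indLift φ f hf (indMk φ N n) = f n := by
  show ((indRels φ N).liftQ _ _) (Submodule.Quotient.mk _) = _
  erw [Submodule.liftQ_apply, Finsupp.lsum_single, LinearMap.toSpanSingleton_apply, one_smul]

end Induced

end GP
namespace GP

universe w'

/-- `G`, together with maps `jA, jB`, is the amalgamated free product
`A *_C B`, i.e. the pushout in the category of groups of `iA : C →* A` and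
`iB : C →* B`: the square commutes and the universal property holds. -/
def IsAmalgamatedProduct {C A B G : Type w'} [Group C] [Group A] [Group B] [Group G]
    (iA : C →* A) (iB : C →* B) (jA : A →* G) (jB : B →* G) : Prop :=
  jA.comp iA = jB.comp iB ∧
  ∀ {H : Type w'} [Group H] (kA : A →* H) (kB : B →* H),
    kA.comp iA = kB.comp iB → ∃! φ : G →* H, φ.comp jA = kA ∧ φ.comp jB = kB

end GP

/-!
STATEMENT 1: let `G₀ = A *_C B` (the pushout of the injections `iA : C →* A`
and `iB : C →* B`), let `P`, `Q`, `N` be projective modules over `RA`, `RB`,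
`RC` respectively, and suppose the induced modules `N ⊗_{RC} RA` and
`N ⊗_{RC} RB` are direct summands of `P` and `Q` (witnessed by the maps
`ιP, ρP, ιQ, ρQ`).  Then the quotient `S` of
`(P ⊗_{RA} RG₀) ⊕ (Q ⊗_{RB} RG₀)` by the submodule generated by the elements
`((n ⊗ 1), -(n ⊗ 1))` for `n ∈ N` is a projective `RG₀`-module.
-/

namespace GP

universe v'

section AuxLemmas

variable {S T : Type v'} [Ring S] [Ring T] (φ : S →+* T)
variable (N : Type v') [AddCommMonoid N] [Module S N]

lemma indMk_add (n n' : N) :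
    indMk φ N (n + n') = indMk φ N n + indMk φ N n' := by
  show (Submodule.Quotient.mk _ : (N →₀ T) ⧸ indRels φ N) = (Submodule.Quotient.mk _ + Submodule.Quotient.mk _ : (N →₀ T) ⧸ indRels φ N)
  erw [← Submodule.Quotient.mk_add, Submodule.Quotient.eq]
  refine Submodule.subset_span (Or.inl ⟨n, n', ?_⟩)
  abel

lemma indMk_smul (s : S) (n : N) :
    indMk φ N (s • n) = φ s • indMk φ N n := by
  show (Submodule.Quotient.mk _ : (N →₀ T) ⧸ indRels φ N) = (φ s • Submodule.Quotient.mk _ : (N →₀ T) ⧸ indRels φ N)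
  erw [← Submodule.Quotient.mk_smul, Submodule.Quotient.eq]
  refine Submodule.subset_span (Or.inr ⟨s, n, ?_⟩)
  rw [Finsupp.smul_single', mul_one]

/-- `indMk` as an additive monoid homomorphism. -/
noncomputable def indMkHom : N →+ Induced φ N :=
  AddMonoidHom.mk' (indMk φ N) (indMk_add φ N)

@[simp] lemma indMkHom_apply (n : N) : indMkHom φ N n = indMk φ N n := rfl

lemma span_range_indMk :
    Submodule.span T (Set.range (indMk φ N)) = ⊤ := by
  rw [eq_top_iff]
  rintro x -
  obtain ⟨y, rfl⟩ := Submodule.Quotient.mk_surjective (indRels φ N) x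
  induction y using Finsupp.induction with
  | zero =>
      rw [Submodule.Quotient.mk_zero]
      exact Submodule.zero_mem _
  | single_add a b f _ _ ih =>
      rw [Submodule.Quotient.mk_add]
      refine Submodule.add_mem _ ?_ ih
      have : Finsupp.single a b = b • Finsupp.single a (1 : T) := by
        rw [Finsupp.smul_single', mul_one]
      rw [this, Submodule.Quotient.mk_smul]
      exact Submodule.smul_mem _ _ (Submodule.subset_span ⟨a, rfl⟩)

lemma mk_mapRange (x : N →₀ S) :
    (Submodule.Quotient.mk (Finsupp.mapRange φ (map_zero φ) x) : Induced φ N)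
      = indMk φ N (Finsupp.linearCombination S (id : N → N) x) := by
  induction x using Finsupp.induction with
  | zero =>
      rw [Finsupp.mapRange_zero, Submodule.Quotient.mk_zero, map_zero]
      exact (map_zero (indMkHom φ N)).symm
  | single_add a b f _ _ ih =>
      rw [Finsupp.mapRange_add (map_add φ), Submodule.Quotient.mk_add, ih,
        Finsupp.mapRange_single, map_add, Finsupp.linearCombination_single, id_eq,
        indMk_add]
      congr 1
      have : Finsupp.single a (φ b) = φ b • Finsupp.single a (1 : T) := by
        rw [Finsupp.smul_single', mul_one]
      rw [this, Submodule.Quotient.mk_smul, indMk_smul]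
      rfl

/-- Induction (extension of scalars) preserves projectivity. -/
lemma induced_projective (hN : Module.Projective S N) :
    Module.Projective T (Induced φ N) := by
  obtain ⟨s, hs⟩ := Module.projective_def.mp hN
  -- the section `Induced φ N → (N →₀ T)`
  have hmr : ∀ (c : S) (x : N →₀ S),
      Finsupp.mapRange φ (map_zero φ) (c • x)
        = φ c • Finsupp.mapRange φ (map_zero φ) x := by
    intro c x
    ext a
    simp [Finsupp.mapRange_apply, smul_eq_mul, map_mul]
  set f : N →+ (N →₀ T) :=
    (Finsupp.mapRange.addMonoidHom φ.toAddMonoidHom).comp s.toAddMonoidHom with hf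
  have hsemi : ∀ (c : S) (n : N), f (c • n) = φ c • f n := by
    intro c n
    simp only [hf, AddMonoidHom.coe_comp, Function.comp_apply,
      LinearMap.toAddMonoidHom_coe, Finsupp.mapRange.addMonoidHom_apply,
      RingHom.toAddMonoidHom_eq_coe, AddMonoidHom.coe_coe]
    rw [map_smul]
    exact hmr c (s n)
  refine Module.Projective.of_split (M := N →₀ T)
    (indLift φ f hsemi) ((indRels φ N).mkQ) ?_
  refine LinearMap.ext_on (span_range_indMk φ N) ?_
  rintro x ⟨n, rfl⟩
  erw [LinearMap.comp_apply, indLift_indMk, LinearMap.id_apply (R := T)]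
  show (Submodule.Quotient.mk (f n) : Induced φ N) = indMk φ N n
  have : f n = Finsupp.mapRange φ (map_zero φ) (s n) := rfl
  rw [this, mk_mapRange, hs n]

end AuxLemmas

end GP

open GP

set_option maxHeartbeats 3200000 in
theorem quotient_module_projective
    {R : Type u} [CommRing R]
    {C A B G₀ : Type u} [Group C] [Group A] [Group B] [Group G₀]
    (iA : C →* A) (iB : C →* B) (jA : A →* G₀) (jB : B →* G₀)
    (hiA : Function.Injective iA) (hiB : Function.Injective iB)
    (hpush : IsAmalgamatedProduct iA iB jA jB)
    (P : Type u) [AddCommGroup P] [Module (MonoidAlgebra R A) P]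
    (Q : Type u) [AddCommGroup Q] [Module (MonoidAlgebra R B) Q]
    (N : Type u) [AddCommGroup N] [Module (MonoidAlgebra R C) N]
    (hP : Module.Projective (MonoidAlgebra R A) P)
    (hQ : Module.Projective (MonoidAlgebra R B) Q)
    (hN : Module.Projective (MonoidAlgebra R C) N)
    -- `N ⊗_{RC} RA` is a direct summand of `P`
    (ιP : Induced (MonoidAlgebra.mapDomainRingHom R iA) N →ₗ[MonoidAlgebra R A] P)
    (ρP : P →ₗ[MonoidAlgebra R A] Induced (MonoidAlgebra.mapDomainRingHom R iA) N)
    (hP' : ρP.comp ιP = LinearMap.id)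
    -- `N ⊗_{RC} RB` is a direct summand of `Q`
    (ιQ : Induced (MonoidAlgebra.mapDomainRingHom R iB) N →ₗ[MonoidAlgebra R B] Q)
    (ρQ : Q →ₗ[MonoidAlgebra R B] Induced (MonoidAlgebra.mapDomainRingHom R iB) N)
    (hQ' : ρQ.comp ιQ = LinearMap.id) :
    Module.Projective (MonoidAlgebra R G₀)
      ((Induced (MonoidAlgebra.mapDomainRingHom R jA) P ×
        Induced (MonoidAlgebra.mapDomainRingHom R jB) Q) ⧸
        Submodule.span (MonoidAlgebra R G₀)
          {x | ∃ n : N,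
            x = (indMk (MonoidAlgebra.mapDomainRingHom R jA) P
                   (ιP (indMk (MonoidAlgebra.mapDomainRingHom R iA) N n)),
                 - indMk (MonoidAlgebra.mapDomainRingHom R jB) Q
                   (ιQ (indMk (MonoidAlgebra.mapDomainRingHom R iB) N n)))}) := by
  classical
  have hcompA : ∀ x : MonoidAlgebra R C, (MonoidAlgebra.mapDomainRingHom R jA) ((MonoidAlgebra.mapDomainRingHom R iA) x) = (MonoidAlgebra.mapDomainRingHom R (jA.comp iA)) x := by
    intro x
    rw [MonoidAlgebra.mapDomainRingHom_comp]
    rfl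
  have hcompB : ∀ x : MonoidAlgebra R C, (MonoidAlgebra.mapDomainRingHom R jB) ((MonoidAlgebra.mapDomainRingHom R iB) x) = (MonoidAlgebra.mapDomainRingHom R (jA.comp iA)) x := by
    intro x
    rw [hpush.1, MonoidAlgebra.mapDomainRingHom_comp]
    rfl
  -- the antidiagonal map `N → (P ⊗ RG) × (Q ⊗ RG)`
  let f : N →+ (Induced (MonoidAlgebra.mapDomainRingHom R jA) P × Induced (MonoidAlgebra.mapDomainRingHom R jB) Q) :=
    AddMonoidHom.mk' (fun n => (indMk (MonoidAlgebra.mapDomainRingHom R jA) P (ιP (indMk (MonoidAlgebra.mapDomainRingHom R iA) N n)),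
      - indMk (MonoidAlgebra.mapDomainRingHom R jB) Q (ιQ (indMk (MonoidAlgebra.mapDomainRingHom R iB) N n)))) (by
        intro n m
        rw [indMk_add (MonoidAlgebra.mapDomainRingHom R iA), map_add, indMk_add (MonoidAlgebra.mapDomainRingHom R jA), indMk_add (MonoidAlgebra.mapDomainRingHom R iB), map_add,
          indMk_add (MonoidAlgebra.mapDomainRingHom R jB), neg_add, Prod.mk_add_mk])
  have hf : ∀ (s : MonoidAlgebra R C) (n : N), f (s • n) = (MonoidAlgebra.mapDomainRingHom R (jA.comp iA)) s • f n := by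
    intro s n
    dsimp only [f, AddMonoidHom.mk', AddMonoidHom.coe_mk, ZeroHom.coe_mk]
    rw [Prod.smul_mk, indMk_smul (MonoidAlgebra.mapDomainRingHom R iA), map_smul, indMk_smul (MonoidAlgebra.mapDomainRingHom R jA), hcompA,
      indMk_smul (MonoidAlgebra.mapDomainRingHom R iB), map_smul, indMk_smul (MonoidAlgebra.mapDomainRingHom R jB), hcompB, smul_neg]
  let δ : Induced (MonoidAlgebra.mapDomainRingHom R (jA.comp iA)) N →ₗ[MonoidAlgebra R G₀] (Induced (MonoidAlgebra.mapDomainRingHom R jA) P × Induced (MonoidAlgebra.mapDomainRingHom R jB) Q) :=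
    indLift (MonoidAlgebra.mapDomainRingHom R (jA.comp iA)) f hf
  have hδmk : ∀ n : N, δ (indMk (MonoidAlgebra.mapDomainRingHom R (jA.comp iA)) N n)
      = (indMk (MonoidAlgebra.mapDomainRingHom R jA) P (ιP (indMk (MonoidAlgebra.mapDomainRingHom R iA) N n)), - indMk (MonoidAlgebra.mapDomainRingHom R jB) Q (ιQ (indMk (MonoidAlgebra.mapDomainRingHom R iB) N n))) := by
    intro n
    show indLift (MonoidAlgebra.mapDomainRingHom R (jA.comp iA)) f hf (indMk (MonoidAlgebra.mapDomainRingHom R (jA.comp iA)) N n) = _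
    rw [indLift_indMk]
    rfl
  -- the retraction
  letI : Module (MonoidAlgebra R A) (Induced (MonoidAlgebra.mapDomainRingHom R (jA.comp iA)) N) :=
    Module.compHom _ (MonoidAlgebra.mapDomainRingHom R jA)
  let u : Induced (MonoidAlgebra.mapDomainRingHom R iA) N →ₗ[MonoidAlgebra R A] Induced (MonoidAlgebra.mapDomainRingHom R (jA.comp iA)) N :=
    indLift (MonoidAlgebra.mapDomainRingHom R iA) (indMkHom (MonoidAlgebra.mapDomainRingHom R (jA.comp iA)) N) (by
      intro s n
      show indMk (MonoidAlgebra.mapDomainRingHom R (jA.comp iA)) N (s • n) = (MonoidAlgebra.mapDomainRingHom R jA) ((MonoidAlgebra.mapDomainRingHom R iA) s) • indMk (MonoidAlgebra.mapDomainRingHom R (jA.comp iA)) N n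
      rw [indMk_smul (MonoidAlgebra.mapDomainRingHom R (jA.comp iA)), hcompA])
  let rP : Induced (MonoidAlgebra.mapDomainRingHom R jA) P →ₗ[MonoidAlgebra R G₀] Induced (MonoidAlgebra.mapDomainRingHom R (jA.comp iA)) N :=
    indLift (MonoidAlgebra.mapDomainRingHom R jA) (u.toAddMonoidHom.comp ρP.toAddMonoidHom) (by
      intro s p
      show u (ρP (s • p)) = (MonoidAlgebra.mapDomainRingHom R jA) s • u (ρP p)
      rw [map_smul]
      exact u.map_smul s (ρP p))
  let r : (Induced (MonoidAlgebra.mapDomainRingHom R jA) P × Induced (MonoidAlgebra.mapDomainRingHom R jB) Q) →ₗ[MonoidAlgebra R G₀] Induced (MonoidAlgebra.mapDomainRingHom R (jA.comp iA)) N :=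
    rP.comp (LinearMap.fst _ _ _)
  have hrδ : ∀ n : N, r (δ (indMk (MonoidAlgebra.mapDomainRingHom R (jA.comp iA)) N n)) = indMk (MonoidAlgebra.mapDomainRingHom R (jA.comp iA)) N n := by
    intro n
    rw [hδmk]
    have h1 : ρP (ιP (indMk (MonoidAlgebra.mapDomainRingHom R iA) N n)) = indMk (MonoidAlgebra.mapDomainRingHom R iA) N n := by
      have := LinearMap.ext_iff.mp hP' (indMk (MonoidAlgebra.mapDomainRingHom R iA) N n)
      simpa using this
    simp only [r, rP, LinearMap.comp_apply, LinearMap.fst_apply, indLift_indMk,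
      AddMonoidHom.coe_comp, LinearMap.toAddMonoidHom_coe, Function.comp_apply]
    rw [h1]
    simp only [u, indLift_indMk, indMkHom_apply]
  have hδrδ : δ.comp (r.comp δ) = δ := by
    refine LinearMap.ext_on (span_range_indMk (MonoidAlgebra.mapDomainRingHom R (jA.comp iA)) N) ?_
    rintro x ⟨n, rfl⟩
    simp only [LinearMap.comp_apply]
    rw [hrδ]
  -- identify the span with the range of `δ`
  have hset : {x : Induced (MonoidAlgebra.mapDomainRingHom R jA) P × Induced (MonoidAlgebra.mapDomainRingHom R jB) Q | ∃ n : N,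
      x = (indMk (MonoidAlgebra.mapDomainRingHom R jA) P (ιP (indMk (MonoidAlgebra.mapDomainRingHom R iA) N n)), - indMk (MonoidAlgebra.mapDomainRingHom R jB) Q (ιQ (indMk (MonoidAlgebra.mapDomainRingHom R iB) N n)))}
      = ⇑δ '' Set.range (indMk (MonoidAlgebra.mapDomainRingHom R (jA.comp iA)) N) := by
    ext x
    constructor
    · rintro ⟨n, rfl⟩
      exact ⟨indMk (MonoidAlgebra.mapDomainRingHom R (jA.comp iA)) N n, ⟨n, rfl⟩, hδmk n⟩
    · rintro ⟨y, ⟨n, rfl⟩, rfl⟩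
      exact ⟨n, (hδmk n)⟩
  have hK : Submodule.span (MonoidAlgebra R G₀)
      {x : Induced (MonoidAlgebra.mapDomainRingHom R jA) P × Induced (MonoidAlgebra.mapDomainRingHom R jB) Q | ∃ n : N,
        x = (indMk (MonoidAlgebra.mapDomainRingHom R jA) P (ιP (indMk (MonoidAlgebra.mapDomainRingHom R iA) N n)), - indMk (MonoidAlgebra.mapDomainRingHom R jB) Q (ιQ (indMk (MonoidAlgebra.mapDomainRingHom R iB) N n)))}
      = LinearMap.range δ := by
    rw [hset, Submodule.span_image, span_range_indMk, Submodule.map_top]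
  rw [hK]
  -- the quotient is a direct summand of a projective module
  haveI : Module.Projective (MonoidAlgebra R G₀) (Induced (MonoidAlgebra.mapDomainRingHom R jA) P) :=
    induced_projective (MonoidAlgebra.mapDomainRingHom R jA) P hP
  haveI : Module.Projective (MonoidAlgebra R G₀) (Induced (MonoidAlgebra.mapDomainRingHom R jB) Q) :=
    induced_projective (MonoidAlgebra.mapDomainRingHom R jB) Q hQ
  let σ : ((Induced (MonoidAlgebra.mapDomainRingHom R jA) P × Induced (MonoidAlgebra.mapDomainRingHom R jB) Q) ⧸ LinearMap.range δ)
      →ₗ[MonoidAlgebra R G₀] (Induced (MonoidAlgebra.mapDomainRingHom R jA) P × Induced (MonoidAlgebra.mapDomainRingHom R jB) Q) :=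
    Submodule.liftQ _ (LinearMap.id - δ.comp r) (by
      rintro x ⟨y, rfl⟩
      simp only [LinearMap.mem_ker, LinearMap.sub_apply, LinearMap.id_apply,
        LinearMap.comp_apply, sub_eq_zero]
      exact (LinearMap.ext_iff.mp hδrδ y).symm)
  refine Module.Projective.of_split σ (LinearMap.range δ).mkQ ?_
  refine Submodule.linearMap_qext _ ?_
  refine LinearMap.ext fun x => ?_
  simp only [LinearMap.comp_apply, Submodule.mkQ_apply, LinearMap.id_apply, σ,
    Submodule.liftQ_apply, LinearMap.sub_apply, map_sub]
  rw [sub_eq_self, Submodule.Quotient.mk_eq_zero]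
  exact ⟨r x, rfl⟩
end

section
/- Let Γ be a finite simplicial graph with a group G_v assigned to each vertex v. Fix a vertex v, let Δ be the full subgraph of Γ on all vertices except v, and let Ω be the full subgraph on v and all vertices adjacent to v. Then G(Γ) is isomorphic to the amalgamated free product (G_v × G(Ω ∩ Δ)) *_{G(Ω ∩ Δ)} G(Δ); that is, G(Γ) is the pushout in the category of groups of the natural inclusions G(Ω ∩ Δ) → G_v × G(Ω ∩ Δ) and G(Ω ∩ Δ) → G(Δ). -/
/-!
Shared infrastructure.  Following standard practice in Mathlib (e.g. `Rep R G`),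
we work with *left* modules over the group ring `MonoidAlgebra R G`; for group
rings the categories of left and right modules are equivalent, so this is the
usual formalization of the paper's "right `RA`-modules".
-/

universe u

namespace GP

universe w

open Monoid

section GraphProduct

variable {V : Type w} (Γ : SimpleGraph V) (G : V → Type w) [∀ v, Group (G v)]

/-- The relations of a graph product: the normal closure, inside the free
product of the vertex groups, of the commutators `g⁻¹h⁻¹gh` for `g ∈ G v`,
`h ∈ G w` and `v, w` adjacent. -/
def graphRels : Subgroup (CoprodI G) :=
  Subgroup.normalClosure
    {x | ∃ (v w : V) (_ : Γ.Adj v w) (g : G v) (h : G w),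
      x = (CoprodI.of g)⁻¹ * (CoprodI.of h)⁻¹ * CoprodI.of g * CoprodI.of h}

instance : (graphRels Γ G).Normal := Subgroup.normalClosure_normal

/-- The graph product of the groups `G v` along the (simplicial) graph `Γ`:
the quotient of the free product of the `G v` by the normal closure of the
commutators of elements of adjacent vertex groups. -/
def GraphProduct : Type w := CoprodI G ⧸ graphRels Γ G

instance : Group (GraphProduct Γ G) :=
  inferInstanceAs (Group (CoprodI G ⧸ graphRels Γ G))

/-- The canonical homomorphism from a vertex group to the graph product. -/
def GraphProduct.of {v : V} : G v →* GraphProduct Γ G :=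
  (QuotientGroup.mk' (graphRels Γ G)).comp CoprodI.of

lemma GraphProduct.of_commute {v w : V} (h : Γ.Adj v w) (g : G v) (k : G w) :
    Commute (GraphProduct.of Γ G g) (GraphProduct.of Γ G k) := by
  have hmem : ((CoprodI.of g)⁻¹ * (CoprodI.of k)⁻¹ * CoprodI.of g * CoprodI.of k :
      CoprodI G) ∈ graphRels Γ G :=
    Subgroup.subset_normalClosure ⟨v, w, h, g, k, rfl⟩
  have h1 : ((GraphProduct.of Γ G g)⁻¹ * (GraphProduct.of Γ G k)⁻¹ *
      GraphProduct.of Γ G g * GraphProduct.of Γ G k : GraphProduct Γ G) = 1 := by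
    have := (QuotientGroup.eq_one_iff _).2 hmem
    exact this
  have := mul_eq_one_iff_eq_inv.1 h1
  rw [Commute, SemiconjBy]
  calc GraphProduct.of Γ G g * GraphProduct.of Γ G k
      = (GraphProduct.of Γ G k) * ((GraphProduct.of Γ G k)⁻¹ *
          (GraphProduct.of Γ G g) * (GraphProduct.of Γ G k)) := by group
    _ = (GraphProduct.of Γ G k) * (GraphProduct.of Γ G g) := by
        congr 1
        have : (GraphProduct.of Γ G g)⁻¹ * (GraphProduct.of Γ G k)⁻¹ *
            GraphProduct.of Γ G g * GraphProduct.of Γ G k = 1 := h1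
        group at this ⊢
        -- from h1 : g⁻¹ k⁻¹ g k = 1 we get k⁻¹ g k = g
        have h2 : (GraphProduct.of Γ G k)⁻¹ * GraphProduct.of Γ G g *
            GraphProduct.of Γ G k = GraphProduct.of Γ G g := by
          have := congrArg (fun x => GraphProduct.of Γ G g * x) h1
          simpa [mul_assoc] using this
        group at h2 ⊢
        simpa using h2
  
/-- A complete subgraph (clique) of `Γ`, as a finite set of pairwise adjacent
vertices. -/
def IsCompleteSubgraph (K : Finset V) : Prop :=
  ∀ ⦃v⦄, v ∈ K → ∀ ⦃w⦄, w ∈ K → v ≠ w → Γ.Adj v w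

end GraphProduct

end GP

namespace GP

open Monoid

universe v'

section LiftExt

variable {V : Type w} {Γ : SimpleGraph V} {G : V → Type w} [∀ v, Group (G v)]
  {H : Type v'} [Group H]

theorem GraphProduct.mk_surjective :
    Function.Surjective (QuotientGroup.mk' (graphRels Γ G)) :=
  QuotientGroup.mk'_surjective _

/-- The universal property of the graph product: a family of homomorphisms
whose images at adjacent vertices commute induces a homomorphism from the
graph product. -/
def GraphProduct.lift (f : ∀ v, G v →* H)
    (hf : ∀ ⦃v w⦄, Γ.Adj v w → ∀ (g : G v) (k : G w), Commute (f v g) (f w k)) :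
    GraphProduct Γ G →* H :=
  QuotientGroup.lift _ (CoprodI.lift f) (by
    intro x hx
    refine Subgroup.normalClosure_le_normal ?_ hx
    rintro y ⟨a, b, hab, g, k, rfl⟩
    have h := hf hab g k
    simp only [SetLike.mem_coe, MonoidHom.mem_ker, map_mul, map_inv, CoprodI.lift_of]
    have h2 : (f a g)⁻¹ * (f b k)⁻¹ * (f a g) * (f b k)
        = (f a g)⁻¹ * ((f b k)⁻¹ * ((f b k) * (f a g))) := by
      rw [← h.eq]; group
    rw [h2]; group)

@[simp] theorem GraphProduct.lift_of (f : ∀ v, G v →* H)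
    (hf : ∀ ⦃v w⦄, Γ.Adj v w → ∀ (g : G v) (k : G w), Commute (f v g) (f w k))
    {v : V} (g : G v) :
    GraphProduct.lift f hf (GraphProduct.of Γ G g) = f v g := by
  exact CoprodI.lift_of f g

theorem GraphProduct.hom_ext {f g : GraphProduct Γ G →* H}
    (h : ∀ (v) (x : G v),
      f (GraphProduct.of Γ G x) = g (GraphProduct.of Γ G x)) : f = g := by
  have h2 : f.comp (QuotientGroup.mk' (graphRels Γ G))
      = g.comp (QuotientGroup.mk' (graphRels Γ G)) :=
    CoprodI.ext_hom _ _ (fun v => MonoidHom.ext fun x => h v x)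
  ext x
  obtain ⟨y, rfl⟩ := GraphProduct.mk_surjective x
  exact DFunLike.congr_fun h2 y

theorem GraphProduct.induction_on {C : GraphProduct Γ G → Prop}
    (x : GraphProduct Γ G) (one : C 1)
    (of : ∀ (v) (g : G v), C (GraphProduct.of Γ G g))
    (mul : ∀ x y, C x → C y → C (x * y)) : C x := by
  obtain ⟨y, rfl⟩ := GraphProduct.mk_surjective x
  induction y using CoprodI.induction_on with
  | one => exact one
  | of v g => exact of v g
  | mul a b ha hb => exact mul _ _ ha hb

end LiftExt

section Fam

variable {V : Type w} [DecidableEq V] (Γ : SimpleGraph V) (G : V → Type w)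
  [∀ v, Group (G v)] (v₀ : V) {H : Type w} [Group H]

/-- The family of vertex homomorphisms assembled from a homomorphism on the
vertex group `G v₀` and one on the graph product over the complement of
`v₀`. -/
def famHom (kA : G v₀ →* H)
    (kB : GraphProduct (Γ.induce {w : V | w ≠ v₀}) (fun w => G w.1) →* H)
    (v : V) : G v →* H where
  toFun g :=
    if h : v = v₀ then kA (h ▸ g)
    else kB (GraphProduct.of _ _ (v := (⟨v, h⟩ : {w : V | w ≠ v₀})) g)
  map_one' := by
    split_ifs with h
    · subst h; simp
    · simp
  map_mul' g g' := by
    split_ifs with h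
    · subst h; simp
    · simp

@[simp] theorem famHom_self (kA : G v₀ →* H)
    (kB : GraphProduct (Γ.induce {w : V | w ≠ v₀}) (fun w => G w.1) →* H)
    (g : G v₀) : famHom Γ G v₀ kA kB v₀ g = kA g := by
  show (if h : v₀ = v₀ then kA (h ▸ g) else _) = kA g
  rw [dif_pos rfl]

@[simp] theorem famHom_ne (kA : G v₀ →* H)
    (kB : GraphProduct (Γ.induce {w : V | w ≠ v₀}) (fun w => G w.1) →* H)
    {v : V} (h : v ≠ v₀) (g : G v) :
    famHom Γ G v₀ kA kB v g
      = kB (GraphProduct.of _ _ (v := (⟨v, h⟩ : {w : V | w ≠ v₀})) g) := by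
  show (if h : v = v₀ then kA (h ▸ g) else _) = _
  rw [dif_neg h]

end Fam

end GP

/-!
STATEMENT 5: let `v₀` be a vertex of the finite graph `Γ`, let `Δ` be the full
subgraph on all vertices except `v₀` and `Ω` the full subgraph on `v₀` and its
neighbours, so that `Ω ∩ Δ` is the full subgraph on the neighbours of `v₀`.
Then `G(Γ)` is the amalgamated free product
`(G v₀ × G(Ω ∩ Δ)) *_{G(Ω ∩ Δ)} G(Δ)`, i.e. the pushout of the natural
inclusions `G(Ω ∩ Δ) →* G v₀ × G(Ω ∩ Δ)` (given by `x ↦ (1, x)`) and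
`G(Ω ∩ Δ) →* G(Δ)` (induced by the inclusions of the vertex groups), the two
structure maps to `G(Γ)` being likewise induced by the vertex group
inclusions.
-/

open GP

theorem graphProduct_decomposition {V : Type u} [Fintype V]
    (Γ : SimpleGraph V) (G : V → Type u) [∀ v, Group (G v)] (v₀ : V) :
    ∃ (ι : GraphProduct (Γ.induce (Γ.neighborSet v₀)) (fun w => G w.1) →*
           GraphProduct (Γ.induce {w : V | w ≠ v₀}) (fun w => G w.1))
      (jA : (G v₀ × GraphProduct (Γ.induce (Γ.neighborSet v₀)) (fun w => G w.1)) →*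
            GraphProduct Γ G)
      (jB : GraphProduct (Γ.induce {w : V | w ≠ v₀}) (fun w => G w.1) →*
            GraphProduct Γ G),
      -- `ι` is induced by the inclusions of the vertex groups
      (∀ (w : Γ.neighborSet v₀) (g : G w.1),
        ι (GraphProduct.of _ _ (v := w) g)
          = GraphProduct.of (Γ.induce {w : V | w ≠ v₀}) (fun w => G w.1)
              (v := ⟨w.1, (Γ.ne_of_adj w.2).symm⟩) g) ∧
      -- `jA` restricted to `G v₀` and to `G(Ω ∩ Δ)` is induced by the vertex inclusions
      (∀ g : G v₀, jA (g, 1) = GraphProduct.of Γ G g) ∧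
      (∀ (w : Γ.neighborSet v₀) (g : G w.1),
        jA (1, GraphProduct.of _ _ (v := w) g) = GraphProduct.of Γ G g) ∧
      -- `jB` is induced by the vertex inclusions
      (∀ (w : {w : V | w ≠ v₀}) (g : G w.1),
        jB (GraphProduct.of _ _ (v := w) g) = GraphProduct.of Γ G g) ∧
      -- `G(Γ)` is the pushout of `x ↦ (1, x)` and `ι`
      IsAmalgamatedProduct
        ((1 : GraphProduct (Γ.induce (Γ.neighborSet v₀)) (fun w => G w.1) →* G v₀).prod
          (MonoidHom.id _))
        ι jA jB := by
  classical
  letI : DecidableEq V := Classical.decEq V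
  -- the map `ι : G(Ω ∩ Δ) →* G(Δ)` induced by the vertex inclusions
  set ι : GraphProduct (Γ.induce (Γ.neighborSet v₀)) (fun w => G w.1) →*
      GraphProduct (Γ.induce {w : V | w ≠ v₀}) (fun w => G w.1) :=
    GraphProduct.lift
      (fun w => GraphProduct.of (Γ.induce {w : V | w ≠ v₀}) (fun w => G w.1)
        (v := ⟨w.1, (Γ.ne_of_adj w.2).symm⟩))
      (fun a b hab g k => by
        exact GraphProduct.of_commute (Γ.induce {w : V | w ≠ v₀}) (fun w => G w.1)
          (show (Γ.induce {w : V | w ≠ v₀}).Adj ⟨a.1, (Γ.ne_of_adj a.2).symm⟩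
            ⟨b.1, (Γ.ne_of_adj b.2).symm⟩ from hab) g k) with hιdef
  have hι_of : ∀ (w : Γ.neighborSet v₀) (g : G w.1),
      ι (GraphProduct.of _ _ (v := w) g)
        = GraphProduct.of (Γ.induce {w : V | w ≠ v₀}) (fun w => G w.1)
            (v := ⟨w.1, (Γ.ne_of_adj w.2).symm⟩) g :=
    by intro w g; rw [hιdef]; apply GraphProduct.lift_of
  -- the map `jB : G(Δ) →* G(Γ)`
  set jB : GraphProduct (Γ.induce {w : V | w ≠ v₀}) (fun w => G w.1) →* GraphProduct Γ G :=
    GraphProduct.lift (fun w => GraphProduct.of Γ G (v := w.1))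
      (fun a b hab g k => GraphProduct.of_commute Γ G hab g k) with hjBdef
  have hjB_of : ∀ (w : {w : V | w ≠ v₀}) (g : G w.1),
      jB (GraphProduct.of _ _ (v := w) g) = GraphProduct.of Γ G g :=
    by intro w g; rw [hjBdef]; apply GraphProduct.lift_of
  -- the map `G(Ω ∩ Δ) →* G(Γ)`
  set jlift : GraphProduct (Γ.induce (Γ.neighborSet v₀)) (fun w => G w.1) →* GraphProduct Γ G :=
    GraphProduct.lift (fun w => GraphProduct.of Γ G (v := w.1))
      (fun a b hab g k => GraphProduct.of_commute Γ G hab g k) with hjliftdef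
  have hjlift_of : ∀ (w : Γ.neighborSet v₀) (g : G w.1),
      jlift (GraphProduct.of _ _ (v := w) g) = GraphProduct.of Γ G g :=
    by intro w g; rw [hjliftdef]; apply GraphProduct.lift_of
  -- the images of `G v₀` and `G(Ω ∩ Δ)` commute in `G(Γ)`
  have hcomm : ∀ (g : G v₀)
      (k : GraphProduct (Γ.induce (Γ.neighborSet v₀)) (fun w => G w.1)),
      Commute (GraphProduct.of Γ G g) (jlift k) := by
    intro g k
    induction k using GraphProduct.induction_on with
    | one => rw [map_one]; exact Commute.one_right _
    | of w x =>
        rw [hjlift_of]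
        exact GraphProduct.of_commute Γ G w.2 g x
    | mul a b ha hb => rw [map_mul]; exact ha.mul_right hb
  set jA : (G v₀ × GraphProduct (Γ.induce (Γ.neighborSet v₀)) (fun w => G w.1)) →*
      GraphProduct Γ G :=
    (GraphProduct.of Γ G (v := v₀)).noncommCoprod jlift hcomm with hjAdef
  have hjA : ∀ (g : G v₀) (y : GraphProduct (Γ.induce (Γ.neighborSet v₀)) (fun w => G w.1)),
      jA (g, y) = GraphProduct.of Γ G g * jlift y := by
    intro g y; rw [hjAdef]; rfl
  have hjA1 : ∀ g : G v₀, jA (g, 1) = GraphProduct.of Γ G g := by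
    intro g; rw [hjA, map_one, mul_one]
  have hjA2 : ∀ (w : Γ.neighborSet v₀) (g : G w.1),
      jA (1, GraphProduct.of _ _ (v := w) g) = GraphProduct.of Γ G g := by
    intro w g; rw [hjA, map_one, one_mul, hjlift_of]
  refine ⟨ι, jA, jB, hι_of, hjA1, hjA2, hjB_of, ?_, ?_⟩
  · -- the square commutes
    refine GraphProduct.hom_ext fun w x => ?_
    simp only [MonoidHom.comp_apply, MonoidHom.prod_apply, MonoidHom.one_apply,
      MonoidHom.id_apply]
    rw [hι_of, hjB_of, hjA, map_one, one_mul, hjlift_of]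
  · -- the universal property
    intro H _ kA kB hcompat
    have hcompat' : ∀ (w : Γ.neighborSet v₀) (x : G w.1),
        kA (1, GraphProduct.of _ _ (v := w) x)
          = kB (GraphProduct.of _ _ (v := (⟨w.1, (Γ.ne_of_adj w.2).symm⟩ :
              {w : V | w ≠ v₀})) x) := by
      intro w x
      have := DFunLike.congr_fun hcompat (GraphProduct.of _ _ (v := w) x)
      simpa only [MonoidHom.comp_apply, MonoidHom.prod_apply, MonoidHom.one_apply,
        MonoidHom.id_apply, hι_of] using this
    set kA' : G v₀ →* H := kA.comp (MonoidHom.inl _ _) with hkA'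
    have hkA'app : ∀ g : G v₀, kA' g = kA (g, 1) := fun _ => rfl
    have key : ∀ (a : V) (hab : Γ.Adj v₀ a) (k : G a),
        famHom Γ G v₀ kA' kB a k
          = kA (1, GraphProduct.of _ _ (v := (⟨a, hab⟩ : Γ.neighborSet v₀)) k) := by
      intro a hab k
      rw [famHom_ne Γ G v₀ kA' kB (Γ.ne_of_adj hab).symm k]
      exact (hcompat' ⟨a, hab⟩ k).symm
    have hcommP : ∀ (x : G v₀)
        (y : GraphProduct (Γ.induce (Γ.neighborSet v₀)) (fun w => G w.1)),
        Commute (kA (x, 1)) (kA (1, y)) := by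
      intro x y
      have h1 : ((x, 1) : G v₀ × GraphProduct (Γ.induce (Γ.neighborSet v₀))
          (fun w => G w.1)) * (1, y) = (1, y) * (x, 1) := by
        simp [Prod.ext_iff]
      exact (show Commute _ _ from h1).map kA
    have hfam : ∀ ⦃a b : V⦄, Γ.Adj a b → ∀ (g : G a) (k : G b),
        Commute (famHom Γ G v₀ kA' kB a g) (famHom Γ G v₀ kA' kB b k) := by
      intro a b hab g k
      by_cases ha : a = v₀
      · subst ha
        rw [key b hab k, famHom_self, hkA'app]
        exact hcommP g _
      · by_cases hb : b = v₀
        · subst hb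
          rw [key a hab.symm g, famHom_self, hkA'app]
          exact (hcommP k _).symm
        · rw [famHom_ne Γ G v₀ kA' kB ha g, famHom_ne Γ G v₀ kA' kB hb k]
          exact (GraphProduct.of_commute (Γ.induce {w : V | w ≠ v₀}) (fun w => G w.1)
            (show (Γ.induce {w : V | w ≠ v₀}).Adj ⟨a, ha⟩ ⟨b, hb⟩ from hab) g k).map kB
    set φ : GraphProduct Γ G →* H := GraphProduct.lift (famHom Γ G v₀ kA' kB) hfam
      with hφdef
    have hφ_of : ∀ (v) (x : G v),
        φ (GraphProduct.of Γ G x) = famHom Γ G v₀ kA' kB v x := by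
      intro v x; rw [hφdef]; apply GraphProduct.lift_of
    have hφ1 : ∀ g : G v₀, φ (jA (g, 1)) = kA (g, 1) := by
      intro g
      rw [hjA1, hφ_of, famHom_self, hkA'app]
    have hinr : ∀ y, φ (jlift y) = kA (1, y) := by
      intro y
      induction y using GraphProduct.induction_on with
      | one => rw [map_one, map_one]; exact (map_one kA).symm ▸ rfl
      | of w x => rw [hjlift_of, hφ_of, key w.1 w.2 x]
      | mul a b ha hb =>
          rw [map_mul, map_mul, ha, hb, ← map_mul, Prod.mk_mul_mk, one_mul]
    have hφA : φ.comp jA = kA := by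
      refine MonoidHom.ext fun p => ?_
      obtain ⟨g, y⟩ := p
      simp only [MonoidHom.comp_apply]
      calc φ (jA (g, y)) = φ (jA ((g, 1) * (1, y))) := by
            rw [Prod.mk_mul_mk, mul_one, one_mul]
        _ = φ (jA (g, 1)) * φ (jA (1, y)) := by rw [map_mul, map_mul]
        _ = kA (g, 1) * kA (1, y) := by
            rw [hφ1]
            congr 1
            rw [hjA, map_one, one_mul, hinr]
        _ = kA (g, y) := by rw [← map_mul, Prod.mk_mul_mk, mul_one, one_mul]
    have hφB : φ.comp jB = kB := by
      refine GraphProduct.hom_ext fun w x => ?_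
      simp only [MonoidHom.comp_apply]
      rw [hjB_of, hφ_of, famHom_ne Γ G v₀ kA' kB w.2 x]
    refine ⟨φ, ⟨hφA, hφB⟩, ?_⟩
    rintro ψ ⟨hψA, hψB⟩
    refine GraphProduct.hom_ext fun v x => ?_
    by_cases hv : v = v₀
    · subst hv
      rw [← hjA1 x]
      calc ψ (jA (x, 1)) = kA (x, 1) := DFunLike.congr_fun hψA (x, 1)
        _ = φ (jA (x, 1)) := (DFunLike.congr_fun hφA (x, 1)).symm
    · rw [← hjB_of (⟨v, hv⟩ : {w : V | w ≠ v₀}) x]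
      calc ψ (jB (GraphProduct.of _ _ (v := (⟨v, hv⟩ : {w : V | w ≠ v₀})) x))
          = kB (GraphProduct.of _ _ (v := (⟨v, hv⟩ : {w : V | w ≠ v₀})) x) :=
            DFunLike.congr_fun hψB _
        _ = φ (jB (GraphProduct.of _ _ (v := (⟨v, hv⟩ : {w : V | w ≠ v₀})) x)) :=
            (DFunLike.congr_fun hφB _).symm
end
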